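/- Let G ⊂ Diff^1_+([0,1]) be a group C^1-close to the identity, witnessed by a sequence h_n with h_n g h_n^{-1} → id in C^1 for all g ∈ G. Let g ∈ G and let 𝓘 be a family of connected components of [0,1] ∖ Fix(g). Then the induced map g_𝓘 (equal to g on the components in 𝓘 and to the identity elsewhere) is a C^1 diffeomorphism of [0,1], and h_n g_𝓘 h_n^{-1} → id in the C^1 topology. -/

import Mathlib

open Set Filter
open Topology

noncomputable section

/-- `f` is an orientation-preserving C¹ diffeomorphism of `[0,1]`, modeled as a
bijection of `ℝ` that equals the identity outside `[0,1]`. -/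
def DiffOnIcc (f : Equiv.Perm ℝ) : Prop :=
  (∀ x : ℝ, x ∉ Icc (0:ℝ) 1 → f x = x) ∧
  MapsTo ⇑f (Icc (0:ℝ) 1) (Icc (0:ℝ) 1) ∧
  StrictMonoOn ⇑f (Icc (0:ℝ) 1) ∧
  ContDiffOn ℝ 1 ⇑f (Icc (0:ℝ) 1) ∧
  ContDiffOn ℝ 1 ⇑f.symm (Icc (0:ℝ) 1) ∧
  ∀ x ∈ Icc (0:ℝ) 1, 0 < derivWithin ⇑f (Icc (0:ℝ) 1) x

/-- The derivative (within `[0,1]`) of a diffeomorphism of `[0,1]`. -/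
def D (f : Equiv.Perm ℝ) (x : ℝ) : ℝ := derivWithin ⇑f (Icc (0:ℝ) 1) x

/-- `f` is an orientation-preserving homeomorphism of `[0,1]`, modeled as a
bijection of `ℝ` that equals the identity outside `[0,1]`. -/
def HomeoOnIcc (f : Equiv.Perm ℝ) : Prop :=
  (∀ x : ℝ, x ∉ Icc (0:ℝ) 1 → f x = x) ∧
  MapsTo ⇑f (Icc (0:ℝ) 1) (Icc (0:ℝ) 1) ∧
  StrictMonoOn ⇑f (Icc (0:ℝ) 1) ∧
  ContinuousOn ⇑f (Icc (0:ℝ) 1)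

/-- `(a,b)` is a connected component of `[0,1] \ Fix f`: `a`, `b` are fixed and
there is no fixed point in between. -/
def IsCompFix (f : Equiv.Perm ℝ) (a b : ℝ) : Prop :=
  a ∈ Icc (0:ℝ) 1 ∧ b ∈ Icc (0:ℝ) 1 ∧ a < b ∧ f a = a ∧ f b = b ∧
  ∀ x ∈ Ioo a b, f x ≠ x

/-- `{a,b}` is a pair of successive fixed points of the group `G`. -/
def SuccFix (G : Subgroup (Equiv.Perm ℝ)) (a b : ℝ) : Prop :=
  ∃ g ∈ G, IsCompFix g a b

lemma aux_uD : UniqueDiffOn ℝ (Icc (0:ℝ) 1) := uniqueDiffOn_Icc one_pos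

variable {f g h : Equiv.Perm ℝ}

lemma aux_symm_fix (hf : DiffOnIcc f) {x : ℝ} (hx : x ∉ Icc (0:ℝ) 1) : f.symm x = x := by
  have h1 : f.symm x ∉ Icc (0:ℝ) 1 := by
    intro hmem
    exact hx (by simpa using hf.2.1 hmem)
  have h2 := hf.1 _ h1
  rw [Equiv.apply_symm_apply] at h2
  exact h2.symm

lemma aux_mapsTo_symm (hf : DiffOnIcc f) : MapsTo ⇑f.symm (Icc (0:ℝ) 1) (Icc (0:ℝ) 1) := by
  intro y hy
  by_contra hc
  have h2 := hf.1 _ hc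
  rw [Equiv.apply_symm_apply] at h2
  exact hc (h2 ▸ hy)

lemma aux_hasD (hf : DiffOnIcc f) {x : ℝ} (hx : x ∈ Icc (0:ℝ) 1) :
    HasDerivWithinAt ⇑f (D f x) (Icc (0:ℝ) 1) x :=
  (hf.2.2.2.1.differentiableOn one_ne_zero x hx).hasDerivWithinAt

lemma aux_hasD_symm (hf : DiffOnIcc f) {x : ℝ} (hx : x ∈ Icc (0:ℝ) 1) :
    HasDerivWithinAt ⇑f.symm (D f.symm x) (Icc (0:ℝ) 1) x :=
  (hf.2.2.2.2.1.differentiableOn one_ne_zero x hx).hasDerivWithinAt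

lemma aux_inv_mul (hf : DiffOnIcc f) {x : ℝ} (hx : x ∈ Icc (0:ℝ) 1) :
    D f.symm (f x) * D f x = 1 := by
  have hcomp : HasDerivWithinAt (⇑f.symm ∘ ⇑f) (D f.symm (f x) * D f x) (Icc (0:ℝ) 1) x :=
    (aux_hasD_symm hf (hf.2.1 hx)).comp x (aux_hasD hf hx) hf.2.1
  have heq : (⇑f.symm ∘ ⇑f) = id := by ext y; simp
  rw [heq] at hcomp
  have h1 := hcomp.derivWithin (aux_uD x hx)
  rw [derivWithin_id _ _ (aux_uD x hx)] at h1
  exact h1.symm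

lemma aux_symm (hf : DiffOnIcc f) : DiffOnIcc f.symm := by
  refine ⟨fun x hx => aux_symm_fix hf hx, aux_mapsTo_symm hf, ?_,
    hf.2.2.2.2.1, by simpa using hf.2.2.2.1, ?_⟩
  · intro a ha b hb hab
    by_contra hc
    push_neg at hc
    have h1 := hf.2.2.1.monotoneOn (aux_mapsTo_symm hf hb) (aux_mapsTo_symm hf ha) hc
    simp only [Equiv.apply_symm_apply] at h1
    exact absurd h1 (not_le.2 hab)
  · intro y hy
    have hx : f.symm y ∈ Icc (0:ℝ) 1 := aux_mapsTo_symm hf hy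
    have h1 := aux_inv_mul hf hx
    rw [Equiv.apply_symm_apply] at h1
    have hpos := hf.2.2.2.2.2 _ hx
    have hpos' : 0 < D f (f.symm y) := hpos
    show 0 < D f.symm y
    rw [eq_inv_of_mul_eq_one_left h1]
    exact inv_pos.2 hpos'

lemma aux_coe_mul : ⇑(f * g) = ⇑f ∘ ⇑g := rfl

lemma aux_coe_inv : ⇑(f⁻¹) = ⇑f.symm := rfl

lemma aux_hasD_mul (ha : DiffOnIcc f) (hb : DiffOnIcc g) {x : ℝ} (hx : x ∈ Icc (0:ℝ) 1) :
    HasDerivWithinAt ⇑(f * g) (D f (g x) * D g x) (Icc (0:ℝ) 1) x := by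
  rw [aux_coe_mul]
  exact (aux_hasD ha (hb.2.1 hx)).comp x (aux_hasD hb hx) hb.2.1

lemma aux_D_mul (ha : DiffOnIcc f) (hb : DiffOnIcc g) {x : ℝ} (hx : x ∈ Icc (0:ℝ) 1) :
    D (f * g) x = D f (g x) * D g x :=
  (aux_hasD_mul ha hb hx).derivWithin (aux_uD x hx)

lemma aux_mul (ha : DiffOnIcc f) (hb : DiffOnIcc g) : DiffOnIcc (f * g) := by
  refine ⟨?_, ?_, ?_, ?_, ?_, ?_⟩
  · intro x hx
    show f (g x) = x
    rw [hb.1 x hx, ha.1 x hx]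
  · rw [aux_coe_mul]; exact ha.2.1.comp hb.2.1
  · rw [aux_coe_mul]; exact ha.2.2.1.comp hb.2.2.1 hb.2.1
  · rw [aux_coe_mul]; exact ha.2.2.2.1.comp hb.2.2.2.1 hb.2.1
  · have hc : ⇑(f * g).symm = ⇑g.symm ∘ ⇑f.symm := rfl
    rw [hc]
    exact hb.2.2.2.2.1.comp ha.2.2.2.2.1 (aux_mapsTo_symm ha)
  · intro x hx
    have h1 := (aux_hasD_mul ha hb hx).derivWithin (aux_uD x hx)
    show 0 < derivWithin (⇑(f*g)) (Icc (0:ℝ) 1) x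
    rw [h1]
    exact mul_pos (ha.2.2.2.2.2 _ (hb.2.1 hx)) (hb.2.2.2.2.2 _ hx)

lemma aux_inv (ha : DiffOnIcc f) : DiffOnIcc f⁻¹ := aux_symm ha

lemma aux_conj_D (hh : DiffOnIcc h) (hgg : DiffOnIcc g) {a : ℝ} (ha : a ∈ Icc (0:ℝ) 1)
    (hfix : g a = a) : D (h * g * h⁻¹) (h a) = D g a := by
  have hhi : DiffOnIcc h⁻¹ := aux_inv hh
  have hha : h a ∈ Icc (0:ℝ) 1 := hh.2.1 ha
  have h1 : D (h * g * h⁻¹) (h a) = D (h * g) (h⁻¹ (h a)) * D h⁻¹ (h a) :=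
    aux_D_mul (aux_mul hh hgg) hhi hha
  have h2 : h⁻¹ (h a) = a := Equiv.symm_apply_apply h a
  have h3 : D (h * g) a = D h (g a) * D g a := aux_D_mul hh hgg ha
  have h4 : D h.symm (h a) * D h a = 1 := aux_inv_mul hh ha
  have h5 : D h⁻¹ (h a) = D h.symm (h a) := rfl
  rw [h1, h2, h3, hfix, h5]
  calc D h a * D g a * D h.symm (h a) = D g a * (D h.symm (h a) * D h a) := by ring
    _ = D g a := by rw [h4, mul_one]

lemma aux_fix_D_one (hgg : DiffOnIcc g) (h : ℕ → Equiv.Perm ℝ) (hdiff : ∀ n, DiffOnIcc (h n))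
    (hconvg : ∀ ε > (0:ℝ), ∃ N : ℕ, ∀ n ≥ N, ∀ x ∈ Icc (0:ℝ) 1,
      |(h n * g * (h n)⁻¹) x - x| < ε ∧ |D (h n * g * (h n)⁻¹) x - 1| < ε)
    {a : ℝ} (ha : a ∈ Icc (0:ℝ) 1) (hfix : g a = a) : D g a = 1 := by
  by_contra hne
  have hpos : 0 < |D g a - 1| := abs_pos.2 (sub_ne_zero.2 hne)
  obtain ⟨N, hN⟩ := hconvg _ hpos
  have hmem : h N a ∈ Icc (0:ℝ) 1 := (hdiff N).2.1 ha
  have h2 := (hN N le_rfl _ hmem).2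
  rw [aux_conj_D (hdiff N) hgg ha hfix] at h2
  exact lt_irrefl _ h2

lemma aux_mvt (hf : DiffOnIcc f) {u v c : ℝ} (hu : u ∈ Icc (0:ℝ) 1) (hv : v ∈ Icc (0:ℝ) 1)
    (huv : u ≤ v) (hc : ∀ z ∈ Icc u v, |D f z - 1| ≤ c) :
    |(f v - v) - (f u - u)| ≤ c * (v - u) := by
  have hsub : Icc u v ⊆ Icc (0:ℝ) 1 := Icc_subset_Icc hu.1 hv.2
  have hder : ∀ z ∈ Icc u v, HasDerivWithinAt (fun w => f w - w) (D f z - 1) (Icc u v) z :=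
    fun z hz => ((aux_hasD hf (hsub hz)).sub (hasDerivWithinAt_id z _)).mono hsub
  have hb : ∀ z ∈ Icc u v, ‖D f z - 1‖ ≤ c := fun z hz => by
    rw [Real.norm_eq_abs]; exact hc z hz
  have := Convex.norm_image_sub_le_of_norm_hasDerivWithin_le hder hb (convex_Icc u v)
    (left_mem_Icc.2 huv) (right_mem_Icc.2 huv)
  rw [Real.norm_eq_abs, Real.norm_eq_abs, abs_of_nonneg (sub_nonneg.2 huv)] at this
  exact this

lemma aux_key (f : Equiv.Perm ℝ) (hf : DiffOnIcc f) (J : Set (ℝ × ℝ))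
    (hJ : ∀ p ∈ J, p.1 ∈ Icc (0:ℝ) 1 ∧ p.2 ∈ Icc (0:ℝ) 1 ∧ p.1 < p.2 ∧
      f p.1 = p.1 ∧ f p.2 = p.2 ∧ D f p.1 = 1 ∧ D f p.2 = 1)
    (k : ℝ → ℝ)
    (hk1 : ∀ x, (∃ p ∈ J, x ∈ Ioo p.1 p.2) → k x = f x)
    (hk2 : ∀ x, (¬ ∃ p ∈ J, x ∈ Ioo p.1 p.2) → k x = x) :
    ContDiffOn ℝ 1 k (Icc (0:ℝ) 1) ∧
    (∀ x ∈ Icc (0:ℝ) 1, (∃ p ∈ J, x ∈ Ioo p.1 p.2) →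
      derivWithin k (Icc (0:ℝ) 1) x = D f x) ∧
    (∀ x ∈ Icc (0:ℝ) 1, (¬ ∃ p ∈ J, x ∈ Ioo p.1 p.2) →
      derivWithin k (Icc (0:ℝ) 1) x = 1) := by
  classical
  set U : Set ℝ := {x | ∃ p ∈ J, x ∈ Ioo p.1 p.2} with hUdef
  have hUopen : IsOpen U := by
    have hU2 : U = ⋃ p ∈ J, Ioo p.1 p.2 := by
      ext x
      simp only [hUdef, mem_setOf_eq, mem_iUnion, mem_Ioo, Prod.exists, exists_prop]
    rw [hU2]; exact isOpen_biUnion fun p _ => isOpen_Ioo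
  have hDcont : ContinuousOn (fun z => D f z) (Icc (0:ℝ) 1) :=
    hf.2.2.2.1.continuousOn_derivWithin aux_uD le_rfl
  have hFclosed : IsClosed {z | z ∈ Icc (0:ℝ) 1 ∧ f z = z ∧ D f z = 1} := by
    have hA : IsClosed (Icc (0:ℝ) 1 ∩ (fun z => f z - z) ⁻¹' {0}) :=
      (hf.2.2.2.1.continuousOn.sub continuousOn_id).preimage_isClosed_of_isClosed
        isClosed_Icc isClosed_singleton
    have hB : IsClosed (Icc (0:ℝ) 1 ∩ (fun z => D f z) ⁻¹' {1}) :=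
      hDcont.preimage_isClosed_of_isClosed isClosed_Icc isClosed_singleton
    have hset : {z | z ∈ Icc (0:ℝ) 1 ∧ f z = z ∧ D f z = 1} =
        (Icc (0:ℝ) 1 ∩ (fun z => f z - z) ⁻¹' {0}) ∩
        (Icc (0:ℝ) 1 ∩ (fun z => D f z) ⁻¹' {1}) := by
      ext z
      simp only [mem_setOf_eq, mem_inter_iff, mem_preimage, mem_singleton_iff, sub_eq_zero]
      tauto
    rw [hset]; exact hA.inter hB
  have hbd : ∀ x ∈ Icc (0:ℝ) 1, x ∈ closure U → x ∉ U → f x = x ∧ D f x = 1 := by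
    intro x hx hxc hxU
    have hxF : x ∈ {z | z ∈ Icc (0:ℝ) 1 ∧ f z = z ∧ D f z = 1} := by
      rw [← hFclosed.closure_eq]
      rw [Metric.mem_closure_iff]
      intro ε hε
      obtain ⟨u, huU, hud⟩ := Metric.mem_closure_iff.1 hxc ε hε
      obtain ⟨p, hp, hu⟩ := huU
      obtain ⟨hp1, hp2, hplt, hfx1, hfx2, hD1, hD2⟩ := hJ p hp
      rw [Real.dist_eq] at hud
      have hne : x ≠ u := fun he => hxU ⟨p, hp, he ▸ hu⟩
      rcases hne.lt_or_gt with hlt | hlt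
      · have hxp : x ≤ p.1 := by
          by_contra hcon; push_neg at hcon
          exact hxU ⟨p, hp, hcon, hlt.trans hu.2⟩
        refine ⟨p.1, ⟨hp1, hfx1, hD1⟩, ?_⟩
        rw [Real.dist_eq, abs_of_nonpos (by linarith [hu.1])]
        rw [abs_of_nonpos (by linarith)] at hud
        linarith [hu.1]
      · have hxp : p.2 ≤ x := by
          by_contra hcon; push_neg at hcon
          exact hxU ⟨p, hp, hu.1.trans hlt, hcon⟩
        refine ⟨p.2, ⟨hp2, hfx2, hD2⟩, ?_⟩
        rw [Real.dist_eq, abs_of_nonneg (by linarith [hu.2])]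
        rw [abs_of_nonneg (by linarith)] at hud
        linarith [hu.2]
    exact ⟨hxF.2.1, hxF.2.2⟩
  have hmain : ∀ x ∈ Icc (0:ℝ) 1,
      HasDerivWithinAt k (if x ∈ U then D f x else 1) (Icc (0:ℝ) 1) x := by
    intro x hx
    by_cases hxU : x ∈ U
    · rw [if_pos hxU]
      exact (aux_hasD hf hx).congr_of_eventuallyEq
        (by filter_upwards [mem_nhdsWithin_of_mem_nhds (hUopen.mem_nhds hxU)] with y hy
            using hk1 y hy)
        (hk1 x hxU)
    · rw [if_neg hxU]
      by_cases hxc : x ∈ closure U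
      · obtain ⟨hfx, hDx⟩ := hbd x hx hxc hxU
        rw [hasDerivWithinAt_iff_isLittleO, Asymptotics.isLittleO_iff]
        intro c hc
        obtain ⟨δ, hδpos, hδ⟩ := Metric.continuousWithinAt_iff.1 (hDcont x hx) c hc
        have hkx : k x = x := hk2 x hxU
        have hev : ∀ᶠ y in 𝓝[Icc (0:ℝ) 1] x, y ∈ Icc (0:ℝ) 1 ∧ dist y x < δ := by
          filter_upwards [self_mem_nhdsWithin,
            mem_nhdsWithin_of_mem_nhds (Metric.ball_mem_nhds x hδpos)] with y h1 h2
          exact ⟨h1, h2⟩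
        filter_upwards [hev] with y hy
        obtain ⟨hyI, hyd⟩ := hy
        rw [hkx]
        simp only [smul_eq_mul, mul_one, Real.norm_eq_abs]
        have hre : k y - x - (y - x) = k y - y := by ring
        rw [hre]
        rw [Real.dist_eq] at hyd
        by_cases hyU : y ∈ U
        · obtain ⟨p, hp, hyoo⟩ := hyU
          obtain ⟨hp1, hp2, hplt, hfx1, hfx2, _, _⟩ := hJ p hp
          rw [hk1 y ⟨p, hp, hyoo⟩]
          have hxy : x ≠ y := fun he => hxU ⟨p, hp, he ▸ hyoo⟩
          rcases hxy.lt_or_gt with hlt | hlt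
          · have hxp : x ≤ p.1 := by
              by_contra hcon; push_neg at hcon
              exact hxU ⟨p, hp, hcon, hlt.trans hyoo.2⟩
            have hbound : ∀ z ∈ Icc p.1 y, |D f z - 1| ≤ c := by
              intro z hz
              have hzI : z ∈ Icc (0:ℝ) 1 := ⟨le_trans hp1.1 hz.1, le_trans hz.2 hyI.2⟩
              have hzd : dist z x < δ := by
                rw [Real.dist_eq, abs_of_nonneg (by linarith [hz.1])]
                rw [abs_of_nonneg (by linarith)] at hyd
                linarith [hz.2]
              have h6 := hδ hzI hzd
              rw [Real.dist_eq, hDx] at h6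
              exact h6.le
            have h7 := aux_mvt hf hp1 hyI hyoo.1.le hbound
            rw [hfx1, sub_self, sub_zero] at h7
            have h8 : |y - x| = y - x := abs_of_nonneg (by linarith)
            rw [h8]
            calc |f y - y| ≤ c * (y - p.1) := h7
              _ ≤ c * (y - x) := by
                  apply mul_le_mul_of_nonneg_left (by linarith) hc.le
          · have hxp : p.2 ≤ x := by
              by_contra hcon; push_neg at hcon
              exact hxU ⟨p, hp, hyoo.1.trans hlt, hcon⟩
            have hbound : ∀ z ∈ Icc y p.2, |D f z - 1| ≤ c := by
              intro z hz
              have hzI : z ∈ Icc (0:ℝ) 1 := ⟨le_trans hyI.1 hz.1, le_trans hz.2 hp2.2⟩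
              have hzd : dist z x < δ := by
                rw [Real.dist_eq, abs_of_nonpos (by linarith [hz.2])]
                rw [abs_of_nonpos (by linarith)] at hyd
                linarith [hz.1]
              have h6 := hδ hzI hzd
              rw [Real.dist_eq, hDx] at h6
              exact h6.le
            have h7 := aux_mvt hf hyI hp2 hyoo.2.le hbound
            rw [hfx2, sub_self, zero_sub, abs_neg] at h7
            have h8 : |y - x| = x - y := by rw [abs_of_nonpos (by linarith : y - x ≤ 0)]; ring
            rw [h8]
            calc |f y - y| ≤ c * (p.2 - y) := h7
              _ ≤ c * (x - y) := by
                  apply mul_le_mul_of_nonneg_left (by linarith) hc.le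
        · rw [hk2 y hyU, sub_self, abs_zero]
          positivity
      · refine (hasDerivWithinAt_id x _).congr_of_eventuallyEq ?_ (hk2 x hxU)
        filter_upwards [mem_nhdsWithin_of_mem_nhds
          (isClosed_closure.isOpen_compl.mem_nhds hxc)] with y hy
        exact hk2 y fun hyU => hy (subset_closure hyU)
  have hdc : ContinuousOn (fun z => if z ∈ U then D f z else (1:ℝ)) (Icc (0:ℝ) 1) := by
    intro x hx
    by_cases hxU : x ∈ U
    · refine (hDcont x hx).congr_of_eventuallyEq ?_ (if_pos hxU)
      filter_upwards [mem_nhdsWithin_of_mem_nhds (hUopen.mem_nhds hxU)] with y hy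
      exact if_pos hy
    · by_cases hxc : x ∈ closure U
      · have hDx := (hbd x hx hxc hxU).2
        have hval : (if x ∈ U then D f x else (1:ℝ)) = 1 := if_neg hxU
        rw [ContinuousWithinAt, hval]
        rw [Metric.tendsto_nhdsWithin_nhds]
        intro ε hε
        obtain ⟨δ, hδpos, hδ⟩ := Metric.continuousWithinAt_iff.1 (hDcont x hx) ε hε
        refine ⟨δ, hδpos, fun {z} hz hzd => ?_⟩
        by_cases hzU : z ∈ U
        · rw [if_pos hzU]
          have h6 := hδ hz hzd
          rwa [hDx] at h6
        · rw [if_neg hzU]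
          simpa using hε
      · refine (continuousWithinAt_const (b := (1:ℝ))).congr_of_eventuallyEq ?_ (if_neg hxU)
        filter_upwards [mem_nhdsWithin_of_mem_nhds
          (isClosed_closure.isOpen_compl.mem_nhds hxc)] with y hy
        exact if_neg fun hyU => hy (subset_closure hyU)
  have hDeq : ∀ x ∈ Icc (0:ℝ) 1,
      derivWithin k (Icc (0:ℝ) 1) x = if x ∈ U then D f x else 1 :=
    fun x hx => (hmain x hx).derivWithin (aux_uD x hx)
  refine ⟨?_, fun x hx hxU => by rw [hDeq x hx, if_pos (show x ∈ U from hxU)],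
    fun x hx hxU => by rw [hDeq x hx, if_neg (show x ∉ U from hxU)]⟩
  have h1 : ContDiffOn ℝ ((0:ℕ) + 1) k (Icc (0:ℝ) 1) := by
    rw [contDiffOn_succ_iff_derivWithin aux_uD]
    refine ⟨fun x hx => (hmain x hx).differentiableWithinAt, by simp, ?_⟩
    rw [show ((0:ℕ) : WithTop ℕ∞) = 0 from rfl, contDiffOn_zero]
    exact hdc.congr hDeq
  exact_mod_cast h1

/-- maps induced from an element of a group C¹-close to the identity
are C¹ diffeomorphisms and are led to the identity by the same conjugacies. -/
theorem stmt12 (G : Subgroup (Equiv.Perm ℝ)) (hG : ∀ g ∈ G, DiffOnIcc g)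
    (h : ℕ → Equiv.Perm ℝ) (hdiff : ∀ n, DiffOnIcc (h n))
    (hconv : ∀ g ∈ G, ∀ ε > (0:ℝ), ∃ N : ℕ, ∀ n ≥ N, ∀ x ∈ Icc (0:ℝ) 1,
      |(h n * g * (h n)⁻¹) x - x| < ε ∧ |D (h n * g * (h n)⁻¹) x - 1| < ε)
    (g : Equiv.Perm ℝ) (hgG : g ∈ G)
    (gI : Equiv.Perm ℝ) (𝓘 : Set (ℝ × ℝ)) (h𝓘 : ∀ p ∈ 𝓘, IsCompFix g p.1 p.2)
    (heq : ∀ x : ℝ, (∃ p ∈ 𝓘, x ∈ Ioo p.1 p.2) → gI x = g x)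
    (hid : ∀ x : ℝ, (¬ ∃ p ∈ 𝓘, x ∈ Ioo p.1 p.2) → gI x = x) :
    DiffOnIcc gI ∧
    ∀ ε > (0:ℝ), ∃ N : ℕ, ∀ n ≥ N, ∀ x ∈ Icc (0:ℝ) 1,
      |(h n * gI * (h n)⁻¹) x - x| < ε ∧ |D (h n * gI * (h n)⁻¹) x - 1| < ε := by
  have hg : DiffOnIcc g := hG g hgG
  have hconvg := hconv g hgG
  -- components are inside Icc
  have hIccP : ∀ p ∈ 𝓘, Ioo p.1 p.2 ⊆ Icc (0:ℝ) 1 := by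
    intro p hp x hx
    obtain ⟨hp1, hp2, _⟩ := h𝓘 p hp
    exact ⟨hp1.1.trans hx.1.le, hx.2.le.trans hp2.2⟩
  -- endpoints have derivative one
  have hJg : ∀ p ∈ 𝓘, p.1 ∈ Icc (0:ℝ) 1 ∧ p.2 ∈ Icc (0:ℝ) 1 ∧ p.1 < p.2 ∧
      g p.1 = p.1 ∧ g p.2 = p.2 ∧ D g p.1 = 1 ∧ D g p.2 = 1 := by
    intro p hp
    obtain ⟨hp1, hp2, hplt, hf1, hf2, _⟩ := h𝓘 p hp
    exact ⟨hp1, hp2, hplt, hf1, hf2,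
      aux_fix_D_one hg h hdiff hconvg hp1 hf1,
      aux_fix_D_one hg h hdiff hconvg hp2 hf2⟩
  -- monotone image of components
  have hcomp_mem : ∀ (x : ℝ), ∀ p ∈ 𝓘, x ∈ Ioo p.1 p.2 → g x ∈ Ioo p.1 p.2 := by
    intro x p hp hx
    obtain ⟨hp1, hp2, hplt, hf1, hf2, _⟩ := h𝓘 p hp
    have hxI : x ∈ Icc (0:ℝ) 1 := hIccP p hp hx
    constructor
    · calc p.1 = g p.1 := hf1.symm
        _ < g x := hg.2.2.1 hp1 hxI hx.1
    · calc g x < g p.2 := hg.2.2.1 hxI hp2 hx.2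
        _ = p.2 := hf2
  -- relation between two components
  have hrel : ∀ p ∈ 𝓘, ∀ q ∈ 𝓘, ∀ x ∈ Ioo p.1 p.2, ∀ y ∈ Ioo q.1 q.2, x < y →
      (p.1 = q.1 ∧ p.2 = q.2) ∨ p.2 ≤ q.1 := by
    intro p hp q hq x hx y hy hxy
    obtain ⟨hp1, hp2, hplt, hpf1, hpf2, hpno⟩ := h𝓘 p hp
    obtain ⟨hq1, hq2, hqlt, hqf1, hqf2, hqno⟩ := h𝓘 q hq
    by_cases hle : p.2 ≤ q.1
    · exact Or.inr hle
    push_neg at hle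
    left
    constructor
    · by_contra hne
      rcases (Ne.lt_or_gt hne) with h1 | h1
      · exact hpno q.1 ⟨h1, hle⟩ hqf1
      · exact hqno p.1 ⟨h1, hx.1.trans (hxy.trans hy.2)⟩ hpf1
    · by_contra hne
      rcases (Ne.lt_or_gt hne) with h1 | h1
      · exact hqno p.2 ⟨hle, h1⟩ hpf2
      · exact hpno q.2 ⟨hx.1.trans (hxy.trans hy.2), h1⟩ hqf2
  -- strict monotonicity of gI
  have hmono : StrictMonoOn ⇑gI (Icc (0:ℝ) 1) := by
    intro x hx y hy hxy
    by_cases hxU : ∃ p ∈ 𝓘, x ∈ Ioo p.1 p.2 <;>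
      by_cases hyU : ∃ q ∈ 𝓘, y ∈ Ioo q.1 q.2
    · obtain ⟨p, hp, hxp⟩ := hxU
      obtain ⟨q, hq, hyq⟩ := hyU
      rw [heq x ⟨p, hp, hxp⟩, heq y ⟨q, hq, hyq⟩]
      rcases hrel p hp q hq x hxp y hyq hxy with ⟨h1, h2⟩ | h2
      · exact hg.2.2.1 hx hy hxy
      · calc g x < p.2 := (hcomp_mem x p hp hxp).2
          _ ≤ q.1 := h2
          _ < g y := (hcomp_mem y q hq hyq).1
    · obtain ⟨p, hp, hxp⟩ := hxU
      rw [heq x ⟨p, hp, hxp⟩, hid y hyU]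
      have hy2 : p.2 ≤ y := by
        by_contra hcon; push_neg at hcon
        exact hyU ⟨p, hp, hxp.1.trans hxy, hcon⟩
      exact lt_of_lt_of_le (hcomp_mem x p hp hxp).2 hy2
    · obtain ⟨q, hq, hyq⟩ := hyU
      rw [hid x hxU, heq y ⟨q, hq, hyq⟩]
      have hx2 : x ≤ q.1 := by
        by_contra hcon; push_neg at hcon
        exact hxU ⟨q, hq, hcon, hxy.trans hyq.2⟩
      exact lt_of_le_of_lt hx2 (hcomp_mem y q hq hyq).1
    · rw [hid x hxU, hid y hyU]; exact hxy
  -- gI fixes points outside Icc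
  have hout : ∀ x : ℝ, x ∉ Icc (0:ℝ) 1 → gI x = x := by
    intro x hx
    apply hid
    rintro ⟨p, hp, hxp⟩
    exact hx (hIccP p hp hxp)
  -- gI maps Icc to Icc
  have hmaps : MapsTo ⇑gI (Icc (0:ℝ) 1) (Icc (0:ℝ) 1) := by
    intro x hx
    by_cases hxU : ∃ p ∈ 𝓘, x ∈ Ioo p.1 p.2
    · rw [heq x hxU]; exact hg.2.1 hx
    · rw [hid x hxU]; exact hx
  -- key for gI
  obtain ⟨hcd, hD1, hD2⟩ := aux_key g hg 𝓘 hJg ⇑gI heq hid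
  -- symm values
  have hgs1 : ∀ x, (∃ p ∈ 𝓘, x ∈ Ioo p.1 p.2) → gI.symm x = g.symm x := by
    rintro x ⟨p, hp, hx⟩
    obtain ⟨hp1, hp2, hplt, hf1, hf2, _⟩ := h𝓘 p hp
    have hxI : x ∈ Icc (0:ℝ) 1 := hIccP p hp hx
    have hwI : g.symm x ∈ Icc (0:ℝ) 1 := aux_mapsTo_symm hg hxI
    have hgw : g (g.symm x) = x := Equiv.apply_symm_apply _ _
    have hw1 : p.1 < g.symm x := by
      by_contra hcon; push_neg at hcon
      have h5 := hg.2.2.1.monotoneOn hwI hp1 hcon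
      rw [hgw, hf1] at h5
      linarith [hx.1]
    have hw2 : g.symm x < p.2 := by
      by_contra hcon; push_neg at hcon
      have h5 := hg.2.2.1.monotoneOn hp2 hwI hcon
      rw [hgw, hf2] at h5
      linarith [hx.2]
    have h6 : gI (g.symm x) = x := by
      rw [heq _ ⟨p, hp, hw1, hw2⟩, hgw]
    calc gI.symm x = gI.symm (gI (g.symm x)) := by rw [h6]
      _ = g.symm x := Equiv.symm_apply_apply _ _
  have hgs2 : ∀ x, (¬ ∃ p ∈ 𝓘, x ∈ Ioo p.1 p.2) → gI.symm x = x := by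
    intro x hx
    conv_lhs => rw [show x = gI x from (hid x hx).symm]
    exact Equiv.symm_apply_apply _ _
  -- key for gI.symm
  have hgsymm : DiffOnIcc g.symm := aux_symm hg
  have hJgs : ∀ p ∈ 𝓘, p.1 ∈ Icc (0:ℝ) 1 ∧ p.2 ∈ Icc (0:ℝ) 1 ∧ p.1 < p.2 ∧
      g.symm p.1 = p.1 ∧ g.symm p.2 = p.2 ∧ D g.symm p.1 = 1 ∧ D g.symm p.2 = 1 := by
    intro p hp
    obtain ⟨hp1, hp2, hplt, hf1, hf2, hd1, hd2⟩ := hJg p hp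
    have hs1 : g.symm p.1 = p.1 := by rw [Equiv.symm_apply_eq]; exact hf1.symm
    have hs2 : g.symm p.2 = p.2 := by rw [Equiv.symm_apply_eq]; exact hf2.symm
    have hds1 : D g.symm p.1 = 1 := by
      have h5 := aux_inv_mul hg hp1
      rwa [hf1, hd1, mul_one] at h5
    have hds2 : D g.symm p.2 = 1 := by
      have h5 := aux_inv_mul hg hp2
      rwa [hf2, hd2, mul_one] at h5
    exact ⟨hp1, hp2, hplt, hs1, hs2, hds1, hds2⟩
  obtain ⟨hcds, _, _⟩ := aux_key g.symm hgsymm 𝓘 hJgs ⇑gI.symm hgs1 hgs2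
  have hdiffgI : DiffOnIcc gI := by
    refine ⟨hout, hmaps, hmono, hcd, hcds, ?_⟩
    intro x hx
    by_cases hxU : ∃ p ∈ 𝓘, x ∈ Ioo p.1 p.2
    · rw [show derivWithin (⇑gI) (Icc (0:ℝ) 1) x = D g x from hD1 x hx hxU]
      exact hg.2.2.2.2.2 x hx
    · rw [show derivWithin (⇑gI) (Icc (0:ℝ) 1) x = 1 from hD2 x hx hxU]
      exact one_pos
  refine ⟨hdiffgI, ?_⟩
  -- convergence
  intro ε hε
  obtain ⟨N, hN⟩ := hconvg ε hε
  refine ⟨N, fun n hn x hx => ?_⟩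
  set Gn := h n * g * (h n)⁻¹ with hGn
  set Fn := h n * gI * (h n)⁻¹ with hFn
  have hhn : DiffOnIcc (h n) := hdiff n
  have hGnd : DiffOnIcc Gn := aux_mul (aux_mul hhn hg) (aux_inv hhn)
  set Jn : Set (ℝ × ℝ) := (fun p : ℝ × ℝ => (h n p.1, h n p.2)) '' 𝓘 with hJn
  have happ : ∀ z : ℝ, Gn z = h n (g ((h n).symm z)) := fun z => rfl
  have happF : ∀ z : ℝ, Fn z = h n (gI ((h n).symm z)) := fun z => rfl
  have hJnP : ∀ q ∈ Jn, q.1 ∈ Icc (0:ℝ) 1 ∧ q.2 ∈ Icc (0:ℝ) 1 ∧ q.1 < q.2 ∧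
      Gn q.1 = q.1 ∧ Gn q.2 = q.2 ∧ D Gn q.1 = 1 ∧ D Gn q.2 = 1 := by
    rintro q ⟨p, hp, rfl⟩
    obtain ⟨hp1, hp2, hplt, hf1, hf2, hd1, hd2⟩ := hJg p hp
    refine ⟨hhn.2.1 hp1, hhn.2.1 hp2, hhn.2.2.1 hp1 hp2 hplt, ?_, ?_, ?_, ?_⟩
    · rw [happ, Equiv.symm_apply_apply, hf1]
    · rw [happ, Equiv.symm_apply_apply, hf2]
    · rw [hGn, aux_conj_D hhn hg hp1 hf1]; exact hd1
    · rw [hGn, aux_conj_D hhn hg hp2 hf2]; exact hd2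
  have hk1n : ∀ x, (∃ q ∈ Jn, x ∈ Ioo q.1 q.2) → Fn x = Gn x := by
    rintro x ⟨q, ⟨p, hp, rfl⟩, hxq⟩
    obtain ⟨hp1, hp2, hplt, hf1, hf2, _, _⟩ := hJg p hp
    have hxI : x ∈ Icc (0:ℝ) 1 :=
      ⟨(hhn.2.1 hp1).1.trans hxq.1.le, hxq.2.le.trans (hhn.2.1 hp2).2⟩
    have hw1 : p.1 < (h n).symm x := by
      have := (aux_symm hhn).2.2.1 (hhn.2.1 hp1) hxI hxq.1
      rwa [Equiv.symm_apply_apply] at this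
    have hw2 : (h n).symm x < p.2 := by
      have := (aux_symm hhn).2.2.1 hxI (hhn.2.1 hp2) hxq.2
      rwa [Equiv.symm_apply_apply] at this
    rw [happF, happ, heq _ ⟨p, hp, hw1, hw2⟩]
  have hk2n : ∀ x, (¬ ∃ q ∈ Jn, x ∈ Ioo q.1 q.2) → Fn x = x := by
    intro x hxn
    have hw : ¬ ∃ p ∈ 𝓘, (h n).symm x ∈ Ioo p.1 p.2 := by
      rintro ⟨p, hp, hw⟩
      obtain ⟨hp1, hp2, hplt, _⟩ := hJg p hp
      have hwI : (h n).symm x ∈ Icc (0:ℝ) 1 := hIccP p hp hw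
      refine hxn ⟨(h n p.1, h n p.2), ⟨p, hp, rfl⟩, ?_, ?_⟩
      · have := hhn.2.2.1 hp1 hwI hw.1
        rwa [Equiv.apply_symm_apply] at this
      · have := hhn.2.2.1 hwI hp2 hw.2
        rwa [Equiv.apply_symm_apply] at this
    rw [happF, hid _ hw, Equiv.apply_symm_apply]
  obtain ⟨_, hDn1, hDn2⟩ := aux_key Gn hGnd Jn hJnP ⇑Fn hk1n hk2n
  by_cases hxU : ∃ q ∈ Jn, x ∈ Ioo q.1 q.2
  · have hb := hN n hn x hx
    constructor
    · rw [show Fn x = Gn x from hk1n x hxU]; exact hb.1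
    · rw [show D Fn x = D Gn x from hDn1 x hx hxU]; exact hb.2
  · constructor
    · rw [show Fn x = x from hk2n x hxU]; simpa using hε
    · rw [show D Fn x = 1 from hDn2 x hx hxU]; simpa using hε
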